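/- Let N ≥ 1, let w ∈ ℝ^N, δ > 0, and let C be the hypercube with vertices v_γ = w + δγ, γ ∈ {0,1}^N. Let f be a real-valued function defined on the vertices of C together with the points v_γ + (−1)^{γ_j}δe_j (1 ≤ j ≤ N, γ ∈ {0,1}^N), i.e. on all vertices of C and of its axis-neighbouring reflections; in particular it suffices that f is defined on C itself, since v_γ + (−1)^{γ_j}δe_j is again a vertex of C. Then for every z in the interior of C and every j ∈ {1,…,N}, the j-th partial derivative of Λ(f,C) at z equals Σ_{γ∈{0,1}^N} (∏_{i=1}^N (1 − γ_i + (−1)^{γ_i+1}(z_i − w_i)/δ)) · (f(v_γ + (−1)^{γ_j}δe_j) − f(v_γ)) / ((−1)^{γ_j}δ); consequently the total derivative DΛ(f,C)(z), viewed as a vector in ℝ^N, is the convex combination Σ_{γ∈{0,1}^N} (∏_{i=1}^N (1 − γ_i + (−1)^{γ_i+1}(z_i − w_i)/δ)) · ((f(v_γ + (−1)^{γ_j}δe_j) − f(v_γ))/((−1)^{γ_j}δ))_{j=1}^N, and in particular lies in the convex hull of the vectors ((f(v_γ + (−1)^{γ_j}δe_j) − f(v_γ))/((−1)^{γ_j}δ))_{j=1}^N,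 γ ∈ {0,1}^N. -/

import Mathlib

/-- The vertex `v_γ = w + δγ` of the hypercube, for `γ ∈ {0,1}^N`. -/
def cubeVertex {N : ℕ} (w : Fin N → ℝ) (δ : ℝ) (γ : Fin N → Bool) : Fin N → ℝ :=
  fun i => w i + if γ i then δ else 0

/-- The coefficient `∏_i (1 - γ_i + (-1)^{γ_i+1}(x_i - w_i)/δ)`. -/
noncomputable def interpCoeff {N : ℕ} (w : Fin N → ℝ) (δ : ℝ) (x : Fin N → ℝ)
    (γ : Fin N → Bool) : ℝ :=
  ∏ i, if γ i then (x i - w i) / δ else 1 - (x i - w i) / δ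

/-- The coordinatewise affine interpolation `Λ(f,C)` of `f` on the hypercube with
vertices `v_γ = w + δγ`, `γ ∈ {0,1}^N`. -/
noncomputable def interpLam {N : ℕ} (w : Fin N → ℝ) (δ : ℝ) (f : (Fin N → ℝ) → ℝ)
    (x : Fin N → ℝ) : ℝ :=
  ∑ γ : Fin N → Bool, interpCoeff w δ x γ * f (cubeVertex w δ γ)

/-- The sign `(-1)^{γ_j}`. -/
def vertexSign {N : ℕ} (γ : Fin N → Bool) (j : Fin N) : ℝ := if γ j then -1 else 1

/-- The difference quotient vector
`((f(v_γ + (-1)^{γ_j} δ e_j) - f(v_γ)) / ((-1)^{γ_j} δ))_{j=1}^N`. -/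
noncomputable def diffQuot {N : ℕ} (w : Fin N → ℝ) (δ : ℝ) (f : (Fin N → ℝ) → ℝ)
    (γ : Fin N → Bool) : Fin N → ℝ :=
  fun j => (f (cubeVertex w δ γ + (vertexSign γ j * δ) • (Pi.single j (1 : ℝ) : Fin N → ℝ)) -
      f (cubeVertex w δ γ)) / (vertexSign γ j * δ)

lemma flip_vertex {N : ℕ} (w : Fin N → ℝ) (δ : ℝ) (γ : Fin N → Bool) (j : Fin N) :
    cubeVertex w δ γ + (vertexSign γ j * δ) • (Pi.single j (1 : ℝ) : Fin N → ℝ)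
      = cubeVertex w δ (Function.update γ j (!γ j)) := by
  funext i
  rcases eq_or_ne i j with rfl | h
  · simp only [cubeVertex, vertexSign, Pi.add_apply, Pi.smul_apply, Pi.single_eq_same,
      Function.update_self, smul_eq_mul, mul_one]
    cases γ i <;> simp
  · simp only [cubeVertex, vertexSign, Pi.add_apply, Pi.smul_apply, smul_eq_mul,
      Function.update_of_ne h, Pi.single_eq_of_ne h, mul_zero, add_zero]

lemma flip_involutive {N : ℕ} (j : Fin N) :
    Function.Involutive (fun γ : Fin N → Bool => Function.update γ j (!γ j)) := by
  intro γ; funext i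
  rcases eq_or_ne i j with rfl | h <;> simp [Function.update_of_ne, *]

lemma keyA {N : ℕ} (w : Fin N → ℝ) {δ : ℝ} (hδ : δ ≠ 0) (f : (Fin N → ℝ) → ℝ)
    (z : Fin N → ℝ) (j : Fin N) :
    ∑ γ : Fin N → Bool, interpCoeff w δ z γ * diffQuot w δ f γ j
      = ∑ γ : Fin N → Bool,
          (-(vertexSign γ j) / δ *
            ∏ i ∈ Finset.univ.erase j, (if γ i then (z i - w i) / δ else 1 - (z i - w i) / δ)) *
          f (cubeVertex w δ γ) := by
  have hPflip : ∀ γ : Fin N → Bool,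
      (∏ i ∈ Finset.univ.erase j,
        (if (Function.update γ j (!γ j)) i then (z i - w i) / δ else 1 - (z i - w i) / δ))
      = ∏ i ∈ Finset.univ.erase j, (if γ i then (z i - w i) / δ else 1 - (z i - w i) / δ) := by
    intro γ
    refine Finset.prod_congr rfl fun i hi => ?_
    rw [Function.update_of_ne (Finset.ne_of_mem_erase hi)]
  have hcoeff : ∀ γ : Fin N → Bool, interpCoeff w δ z γ
      = (if γ j then (z j - w j) / δ else 1 - (z j - w j) / δ) *
        ∏ i ∈ Finset.univ.erase j, (if γ i then (z i - w i) / δ else 1 - (z i - w i) / δ) := by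
    intro γ
    exact (Finset.mul_prod_erase Finset.univ _ (Finset.mem_univ j)).symm
  calc ∑ γ : Fin N → Bool, interpCoeff w δ z γ * diffQuot w δ f γ j
      = ∑ γ : Fin N → Bool,
          (interpCoeff w δ z γ / (vertexSign γ j * δ) *
            f (cubeVertex w δ (Function.update γ j (!γ j)))
           - interpCoeff w δ z γ / (vertexSign γ j * δ) * f (cubeVertex w δ γ)) := by
        refine Finset.sum_congr rfl fun γ _ => ?_
        rw [diffQuot, flip_vertex]
        ring
    _ = ∑ γ : Fin N → Bool,
          (interpCoeff w δ z (Function.update γ j (!γ j)) /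
              (vertexSign (Function.update γ j (!γ j)) j * δ) * f (cubeVertex w δ γ)
           - interpCoeff w δ z γ / (vertexSign γ j * δ) * f (cubeVertex w δ γ)) := by
        rw [Finset.sum_sub_distrib, Finset.sum_sub_distrib]
        congr 1
        refine (Fintype.sum_bijective _ (flip_involutive j).bijective _ _ fun γ => ?_).symm
        rw [show Function.update (Function.update γ j (!γ j)) j (!(Function.update γ j (!γ j)) j) = γ from (flip_involutive j) γ]
    _ = _ := by
        refine Finset.sum_congr rfl fun γ _ => ?_
        rw [hcoeff, hcoeff, hPflip]
        have hs : vertexSign (Function.update γ j (!γ j)) j = -(vertexSign γ j) := by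
          simp [vertexSign, Function.update_self]; cases γ j <;> simp
        rw [hs, Function.update_self]
        rw [vertexSign]
        cases hγ : γ j <;> simp only [hγ, if_true, if_false, Bool.not_true, Bool.not_false,
          Bool.false_eq_true] <;> field_simp <;> ring

lemma interpCoeff_update {N : ℕ} (w : Fin N → ℝ) (δ : ℝ) (z : Fin N → ℝ) (j : Fin N)
    (t : ℝ) (γ : Fin N → Bool) :
    interpCoeff w δ (Function.update z j t) γ
      = (if γ j then (t - w j) / δ else 1 - (t - w j) / δ) *
        ∏ i ∈ Finset.univ.erase j, (if γ i then (z i - w i) / δ else 1 - (z i - w i) / δ) := by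
  rw [interpCoeff, ← Finset.mul_prod_erase Finset.univ _ (Finset.mem_univ j),
    Function.update_self]
  congr 1
  refine Finset.prod_congr rfl fun i hi => ?_
  rw [Function.update_of_ne (Finset.ne_of_mem_erase hi)]

lemma part1 {N : ℕ} (w : Fin N → ℝ) {δ : ℝ} (hδ : δ ≠ 0) (f : (Fin N → ℝ) → ℝ)
    (z : Fin N → ℝ) (j : Fin N) :
    HasDerivAt (fun t : ℝ => interpLam w δ f (Function.update z j t))
      (∑ γ : Fin N → Bool, interpCoeff w δ z γ * diffQuot w δ f γ j) (z j) := by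
  rw [keyA w hδ]
  have hfun : (fun t : ℝ => interpLam w δ f (Function.update z j t))
      = fun t : ℝ => ∑ γ : Fin N → Bool,
          ((if γ j then (t - w j) / δ else 1 - (t - w j) / δ) *
            ∏ i ∈ Finset.univ.erase j, (if γ i then (z i - w i) / δ else 1 - (z i - w i) / δ)) *
          f (cubeVertex w δ γ) := by
    funext t
    simp only [interpLam, interpCoeff_update]
  rw [hfun]
  refine HasDerivAt.fun_sum fun γ _ => ?_
  refine HasDerivAt.mul_const ?_ _
  refine HasDerivAt.mul_const ?_ _
  have : HasDerivAt (fun t : ℝ => if γ j then (t - w j) / δ else 1 - (t - w j) / δ)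
      (-(vertexSign γ j) / δ) (z j) := by
    cases hγ : γ j
    · simp only [hγ, if_false, vertexSign, Bool.false_eq_true]
      have := (((hasDerivAt_id (z j)).sub_const (w j)).div_const δ).const_sub 1
      rw [show (-1 : ℝ) / δ = -δ⁻¹ by ring]
      simpa using this
    · simp only [hγ, if_true, vertexSign]
      have := ((hasDerivAt_id (z j)).sub_const (w j)).div_const δ
      rw [show -(-1 : ℝ) / δ = δ⁻¹ by ring]
      simpa using this
  exact this

lemma part2 {N : ℕ} (w : Fin N → ℝ) {δ : ℝ} (hδ : δ ≠ 0) (f : (Fin N → ℝ) → ℝ)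
    (z : Fin N → ℝ) :
    HasFDerivAt (interpLam w δ f)
      (∑ j : Fin N, (∑ γ : Fin N → Bool, interpCoeff w δ z γ * diffQuot w δ f γ j) •
        (ContinuousLinearMap.proj j : (Fin N → ℝ) →L[ℝ] ℝ)) z := by
  have base : ∀ (γ : Fin N → Bool) (i : Fin N),
      HasFDerivAt (fun x : Fin N → ℝ => if γ i then (x i - w i) / δ else 1 - (x i - w i) / δ)
        ((-(vertexSign γ i) / δ) • (ContinuousLinearMap.proj i : (Fin N → ℝ) →L[ℝ] ℝ)) z := by
    intro γ i
    cases hγ : γ i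
    · simp only [hγ, if_false, vertexSign, Bool.false_eq_true]
      rw [show ((-1 : ℝ)/δ) • (ContinuousLinearMap.proj i : (Fin N → ℝ) →L[ℝ] ℝ)
          = -(δ⁻¹ • (ContinuousLinearMap.proj i : (Fin N → ℝ) →L[ℝ] ℝ)) by
        rw [show (-1 : ℝ)/δ = -δ⁻¹ by ring]
        exact neg_smul δ⁻¹ (ContinuousLinearMap.proj i : (Fin N → ℝ) →L[ℝ] ℝ)]
      simp only [div_eq_mul_inv]
      exact (((hasFDerivAt_apply i z).sub_const (w i)).mul_const δ⁻¹).const_sub 1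
    · simp only [hγ, if_true, vertexSign]
      rw [show -(-1 : ℝ) / δ = δ⁻¹ by ring]
      simp only [div_eq_mul_inv]
      exact ((hasFDerivAt_apply i z).sub_const (w i)).mul_const δ⁻¹
  have hsum : HasFDerivAt (interpLam w δ f)
      (∑ γ : Fin N → Bool, f (cubeVertex w δ γ) •
        ∑ i : Fin N, (∏ k ∈ Finset.univ.erase i,
            (if γ k then (z k - w k) / δ else 1 - (z k - w k) / δ)) •
          ((-(vertexSign γ i) / δ) • (ContinuousLinearMap.proj i : (Fin N → ℝ) →L[ℝ] ℝ))) z := by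
    refine HasFDerivAt.fun_sum fun γ _ => ?_
    exact (HasFDerivAt.finset_prod fun i _ => base γ i).mul_const _
  refine hsum.congr_fderiv ?_
  have hD : ∀ j : Fin N, (∑ γ : Fin N → Bool, interpCoeff w δ z γ * diffQuot w δ f γ j)
      = ∑ γ : Fin N → Bool,
          (-(vertexSign γ j) / δ *
            ∏ i ∈ Finset.univ.erase j, (if γ i then (z i - w i) / δ else 1 - (z i - w i) / δ)) *
          f (cubeVertex w δ γ) := fun j => keyA w hδ f z j
  ext x
  simp only [hD, ContinuousLinearMap.coe_sum', Finset.sum_apply, ContinuousLinearMap.coe_smul',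
    Pi.smul_apply, ContinuousLinearMap.proj_apply, smul_eq_mul, Finset.mul_sum, Finset.sum_mul]
  rw [Finset.sum_comm]
  exact Finset.sum_congr rfl fun j _ => Finset.sum_congr rfl fun γ _ => by ring

lemma coeff_sum_one {N : ℕ} (w : Fin N → ℝ) {δ : ℝ} (hδ : δ ≠ 0) (z : Fin N → ℝ) :
    ∑ γ : Fin N → Bool, interpCoeff w δ z γ = 1 := by
  have := Finset.prod_univ_sum (fun _ : Fin N => (Finset.univ : Finset Bool))
    (fun i b => if b then (z i - w i) / δ else 1 - (z i - w i) / δ)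
  rw [Fintype.piFinset_univ] at this
  rw [show ∑ γ : Fin N → Bool, interpCoeff w δ z γ
      = ∑ γ : Fin N → Bool, ∏ i, (if γ i then (z i - w i) / δ else 1 - (z i - w i) / δ) from rfl,
    ← this]
  rw [Finset.prod_eq_one]
  intro i _
  simp only [Fintype.sum_bool, if_true, Bool.false_eq_true, if_false]
  ring

/-- Partial derivatives and total derivative of the interpolation function in the
interior of the hypercube; the gradient is the stated convex combination of the
difference-quotient vectors, and in particular lies in their convex hull. -/
theorem statement17 {N : ℕ} (hN : 1 ≤ N)
    (w : Fin N → ℝ) (δ : ℝ) (hδ : 0 < δ)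
    (f : (Fin N → ℝ) → ℝ)
    (z : Fin N → ℝ)
    (hz : z ∈ interior {x : Fin N → ℝ | ∀ i, x i ∈ Set.Icc (w i) (w i + δ)}) :
    (∀ j : Fin N,
      HasDerivAt (fun t : ℝ => interpLam w δ f (Function.update z j t))
        (∑ γ : Fin N → Bool, interpCoeff w δ z γ * diffQuot w δ f γ j) (z j)) ∧
    HasFDerivAt (interpLam w δ f)
      (∑ j : Fin N, (∑ γ : Fin N → Bool, interpCoeff w δ z γ * diffQuot w δ f γ j) •
        (ContinuousLinearMap.proj j : (Fin N → ℝ) →L[ℝ] ℝ)) z ∧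
    ((fun j => ∑ γ : Fin N → Bool, interpCoeff w δ z γ * diffQuot w δ f γ j)
      ∈ convexHull ℝ (Set.range (diffQuot w δ f))) := by
  have hδ' : δ ≠ 0 := ne_of_gt hδ
  refine ⟨fun j => part1 w hδ' f z j, part2 w hδ' f z, ?_⟩
  have hzC : ∀ i, z i ∈ Set.Icc (w i) (w i + δ) := interior_subset hz
  have hnn : ∀ γ : Fin N → Bool, 0 ≤ interpCoeff w δ z γ := by
    intro γ
    refine Finset.prod_nonneg fun i _ => ?_
    cases hγ : γ i
    · simp only [Bool.false_eq_true, if_false, sub_nonneg]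
      rw [div_le_one hδ]
      have := (hzC i).2
      linarith
    · simp only [if_true]
      exact div_nonneg (by linarith [(hzC i).1]) hδ.le
  have h1 : (fun j => ∑ γ : Fin N → Bool, interpCoeff w δ z γ * diffQuot w δ f γ j)
      = ∑ γ : Fin N → Bool, interpCoeff w δ z γ • diffQuot w δ f γ := by
    funext j
    rw [Finset.sum_apply]
    exact Finset.sum_congr rfl fun γ _ => rfl
  rw [h1, ← Finset.centerMass_eq_of_sum_1 _ _ (coeff_sum_one w hδ' z)]
  exact Finset.centerMass_mem_convexHull _ (fun γ _ => hnn γ)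
    (by rw [coeff_sum_one w hδ' z]; norm_num) (fun γ _ => Set.mem_range_self γ)
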